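/- Let Σ and Σ₀ be p×p real symmetric positive definite matrices. Let λ_k and λ_{0,k} denote the k-th largest eigenvalues of Σ and Σ₀ respectively, with corresponding unit eigenvectors u_k and u_{0,k}, and assume λ_k is a simple eigenvalue of Σ. Set Ω = Σ₀^{−1/2} Σ Σ₀^{−1/2}, let U_{0,−k} = [u_{0,1},…,u_{0,k−1}, u_{0,k+1},…,u_{0,p}] ∈ ℝ^{p×(p−1)} be the matrix of the remaining eigenvectors of Σ₀, and let Λ_{0,−k} = diag(λ_{0,1},…,λ_{0,k−1}, λ_{0,k+1},…,λ_{0,p}). Suppose the (p−1)×(p−1) matrix U_{0,−k}ᵀ Ω U_{0,−k} − λ_k Λ_{0,−k}^{−1} is invertible and that λ_{0,k} · ‖ Λ_{0,−k}^{−1/2} ( U_{0,−k}ᵀ Ω U_{0,−k} − λ_k Λ_{0,−k}^{−1} )^{−1} U_{0,−k}ᵀ Ω u_{0,k} ‖₂² < 1. Then (u_kᵀ u_{0,k})² = 1 / ( 1 + ‖ √(λ_{0,k}) · Λ_{0,−k}^{−1/2} ( U_{0,−k}ᵀ Ω U_{0,−k} − λ_k Λ_{0,−k}^{−1} )^{−1}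 U_{0,−k}ᵀ Ω u_{0,k} ‖₂² ). -/

import Mathlib

open Matrix

/-- Euclidean norm of a real vector. -/
noncomputable def vecNorm {n : Type*} [Fintype n] (v : n → ℝ) : ℝ :=
  Real.sqrt (∑ i, v i ^ 2)

/-- `eigval A k` is the `k`-th largest eigenvalue (0-based, counted with multiplicity)
of a hermitian (= real symmetric) matrix `A`. -/
noncomputable def eigval {p : ℕ} (A : Matrix (Fin p) (Fin p) ℝ) (k : Fin p) : ℝ :=
  if hA : A.IsHermitian then hA.eigenvalues (Tuple.sort hA.eigenvalues k.rev) else 0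

open Classical in
/-- The positive definite square root of `A⁻¹`, for `A` positive definite. -/
noncomputable def invSqrt {p : ℕ} (A : Matrix (Fin p) (Fin p) ℝ) : Matrix (Fin p) (Fin p) ℝ :=
  if hA : A.PosDef then
    (hA.inv.posSemidef.1.eigenvectorUnitary : Matrix (Fin p) (Fin p) ℝ) *
      diagonal (fun i => Real.sqrt (hA.inv.posSemidef.1.eigenvalues i)) *
      (star hA.inv.posSemidef.1.eigenvectorUnitary : Matrix (Fin p) (Fin p) ℝ)
  else 0

open scoped MatrixOrder in
theorem invSqrt_eq_of_mul_self {p : ℕ} (A B : Matrix (Fin p) (Fin p) ℝ) (hA : A.PosDef)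
    (hB : B.PosSemidef) (hBB : B * B = A⁻¹) : invSqrt A = B := by
  classical
  rw [invSqrt, dif_pos hA]
  have hH := hA.inv.posSemidef.1
  have h1 : cfc Real.sqrt A⁻¹ = (hA.inv.posSemidef.1.eigenvectorUnitary : Matrix (Fin p) (Fin p) ℝ) *
      diagonal (fun i => Real.sqrt (hA.inv.posSemidef.1.eigenvalues i)) *
      (star hA.inv.posSemidef.1.eigenvectorUnitary : Matrix (Fin p) (Fin p) ℝ) := by
    rw [hA.inv.posSemidef.1.cfc_eq]; rfl
  rw [← h1, ← cfcₙ_eq_cfc, ← CFC.sqrt_eq_real_sqrt _ hA.inv.posSemidef.nonneg]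
  exact CFC.sqrt_unique hBB hB.nonneg

set_option maxHeartbeats 1000000 in
/-- Appendix Lemma D.0 (exact eigenvector overlap formula).  The dimension is
`p = n + 1`; `k.succAbove` enumerates the indices `≠ k`, so `U` is `U_{0,−k}` and the
diagonal matrices are `Λ_{0,−k}^{−1}` and `Λ_{0,−k}^{−1/2}`. -/
theorem statement15 {n : ℕ}
    (Sig Sig0 : Matrix (Fin (n + 1)) (Fin (n + 1)) ℝ)
    (hSig : Sig.PosDef) (hSig0 : Sig0.PosDef)
    (k : Fin (n + 1))
    (lam0 : Fin (n + 1) → ℝ) (u0 : Fin (n + 1) → Fin (n + 1) → ℝ)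
    (hpos : ∀ i, 0 < lam0 i) (hmono : Antitone lam0)
    (horth : ∀ i j, u0 i ⬝ᵥ u0 j = if i = j then (1 : ℝ) else 0)
    (heig0 : ∀ i, Sig0.mulVec (u0 i) = lam0 i • u0 i)
    (lamk : ℝ) (hlamk : lamk = eigval Sig k)
    (uk : Fin (n + 1) → ℝ) (huk : vecNorm uk = 1)
    (heigk : Sig.mulVec uk = lamk • uk)
    (hsimple : ∀ l, l ≠ k → eigval Sig l ≠ eigval Sig k)
    (Omg : Matrix (Fin (n + 1)) (Fin (n + 1)) ℝ)
    (hOmg : Omg = invSqrt Sig0 * Sig * invSqrt Sig0)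
    (U : Matrix (Fin (n + 1)) (Fin n) ℝ)
    (hU : U = Matrix.of fun i j => u0 (k.succAbove j) i)
    (M : Matrix (Fin n) (Fin n) ℝ)
    (hM : M = Uᵀ * Omg * U - lamk • Matrix.diagonal (fun j => (lam0 (k.succAbove j))⁻¹))
    (hMunit : IsUnit M)
    (v : Fin n → ℝ)
    (hv : v = (Matrix.diagonal fun j => (Real.sqrt (lam0 (k.succAbove j)))⁻¹).mulVec
        (M⁻¹.mulVec (Uᵀ.mulVec (Omg.mulVec (u0 k)))))
    (hsmall : lam0 k * vecNorm v ^ 2 < 1) :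
    (uk ⬝ᵥ u0 k) ^ 2 = 1 / (1 + vecNorm (Real.sqrt (lam0 k) • v) ^ 2) := by
  classical
  have hs0 : ∀ i, Real.sqrt (lam0 i) ≠ 0 := fun i =>
    ne_of_gt (Real.sqrt_pos.mpr (hpos i))
  have hsq : ∀ i, Real.sqrt (lam0 i) * Real.sqrt (lam0 i) = lam0 i := fun i =>
    Real.mul_self_sqrt (hpos i).le
  -- the orthogonal matrix whose columns are the `u0 i`
  set P : Matrix (Fin (n + 1)) (Fin (n + 1)) ℝ := Matrix.of fun i j => u0 j i with hP
  have hPtP : Pᵀ * P = 1 := by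
    ext i j
    simpa [Matrix.mul_apply, Matrix.one_apply, hP, dotProduct] using horth i j
  have hPPt : P * Pᵀ = 1 := mul_eq_one_comm.mp hPtP
  have hmid : ∀ (D E : Matrix (Fin (n + 1)) (Fin (n + 1)) ℝ),
      P * D * Pᵀ * (P * E * Pᵀ) = P * (D * E) * Pᵀ := by
    intro D E
    have h : Pᵀ * (P * (E * Pᵀ)) = E * Pᵀ := by rw [← mul_assoc, hPtP, one_mul]
    simp only [mul_assoc, h]
  -- Sig0 in the eigenbasis
  have h0P : Sig0 * P = P * Matrix.diagonal lam0 := by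
    ext i j
    have h := congrFun (heig0 j) i
    simp only [Matrix.mulVec, dotProduct, Pi.smul_apply, smul_eq_mul] at h
    rw [Matrix.mul_apply, Matrix.mul_diagonal]
    simpa [hP, mul_comm] using h
  have hSig0eq : Sig0 = P * Matrix.diagonal lam0 * Pᵀ := by
    calc Sig0 = Sig0 * (P * Pᵀ) := by rw [hPPt, mul_one]
    _ = (Sig0 * P) * Pᵀ := by rw [mul_assoc]
    _ = P * Matrix.diagonal lam0 * Pᵀ := by rw [h0P]
  -- B is the candidate for invSqrt Sig0
  set B : Matrix (Fin (n + 1)) (Fin (n + 1)) ℝ :=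
    P * Matrix.diagonal (fun i => (Real.sqrt (lam0 i))⁻¹) * Pᵀ with hB
  have hBsq : B * B = Sig0⁻¹ := by
    symm
    apply Matrix.inv_eq_right_inv
    rw [hB, hSig0eq, hmid, hmid, Matrix.diagonal_mul_diagonal, Matrix.diagonal_mul_diagonal]
    have : (fun i => lam0 i * ((Real.sqrt (lam0 i))⁻¹ * (Real.sqrt (lam0 i))⁻¹))
        = fun _ => (1 : ℝ) := by
      funext i
      rw [← mul_inv, hsq i, mul_inv_cancel₀ (ne_of_gt (hpos i))]
    rw [this, Matrix.diagonal_one, mul_one, hPPt]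
  have hBpsd : B.PosSemidef := by
    have hd : (Matrix.diagonal (fun i => (Real.sqrt (lam0 i))⁻¹) :
        Matrix (Fin (n + 1)) (Fin (n + 1)) ℝ).PosSemidef :=
      Matrix.posSemidef_diagonal_iff.mpr fun i =>
        inv_nonneg.mpr (Real.sqrt_nonneg _)
    have := hd.mul_mul_conjTranspose_same P
    have hPH : Pᴴ = Pᵀ := by ext i j; simp
    rwa [hPH] at this
  have hTB : invSqrt Sig0 = B := by
    rw [invSqrt, dif_pos hSig0]
    have h := invSqrt_eq_of_mul_self Sig0 B hSig0 hBpsd hBsq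
    rwa [invSqrt, dif_pos hSig0] at h
  -- action of matrices
  have hcolP : ∀ (A : Matrix (Fin (n+1)) (Fin (n+1)) ℝ) (w : Fin (n+1) → ℝ),
      A.mulVec (P.mulVec w) = (A * P).mulVec w := by
    intro A w; rw [Matrix.mulVec_mulVec]
  have hTP : invSqrt Sig0 * P = P * Matrix.diagonal (fun i => (Real.sqrt (lam0 i))⁻¹) := by
    rw [hTB, hB, mul_assoc, hPtP, mul_one]
  -- coordinates of uk
  set c : Fin (n + 1) → ℝ := fun i => u0 i ⬝ᵥ uk with hc
  have hPtuk : Pᵀ.mulVec uk = c := by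
    ext i; simp [Matrix.mulVec, dotProduct, hP, hc]
  have hukc : uk = P.mulVec c := by
    rw [← hPtuk, Matrix.mulVec_mulVec, hPPt, Matrix.one_mulVec]
  have hPtPvec : ∀ w : Fin (n+1) → ℝ, Pᵀ.mulVec (P.mulVec w) = w := by
    intro w; rw [Matrix.mulVec_mulVec, hPtP, Matrix.one_mulVec]
  -- d : scaled coordinates
  set d : Fin (n + 1) → ℝ := fun i => Real.sqrt (lam0 i) * c i with hd
  have hTPd : (invSqrt Sig0).mulVec (P.mulVec d) = uk := by
    rw [hcolP, hTP, ← Matrix.mulVec_mulVec]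
    have hdc : (Matrix.diagonal fun i => (Real.sqrt (lam0 i))⁻¹).mulVec d = c := by
      ext i
      rw [Matrix.mulVec_diagonal]
      simp only [hd]
      rw [← mul_assoc, inv_mul_cancel₀ (hs0 i), one_mul]
    rw [hdc, hukc]
  have hTuk : (invSqrt Sig0).mulVec uk
      = P.mulVec (fun i => (Real.sqrt (lam0 i))⁻¹ * c i) := by
    rw [hukc, hcolP, hTP, ← Matrix.mulVec_mulVec]
    have hdc : (Matrix.diagonal fun i => (Real.sqrt (lam0 i))⁻¹).mulVec c
        = fun i => (Real.sqrt (lam0 i))⁻¹ * c i := by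
      ext i; rw [Matrix.mulVec_diagonal]
    rw [hdc]
  -- the key eigen-equation in coordinates
  have hE : (Pᵀ * Omg * P).mulVec d
      = lamk • fun i => (Real.sqrt (lam0 i))⁻¹ * c i := by
    have h1 : Omg.mulVec (P.mulVec d)
        = lamk • P.mulVec (fun i => (Real.sqrt (lam0 i))⁻¹ * c i) := by
      rw [hOmg, mul_assoc, ← Matrix.mulVec_mulVec, ← Matrix.mulVec_mulVec, hTPd,
        heigk, Matrix.mulVec_smul, hTuk]
    have h2 := congrArg (Pᵀ.mulVec) h1
    rw [Matrix.mulVec_smul, hPtPvec] at h2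
    rw [← h2, mul_assoc, ← Matrix.mulVec_mulVec, ← Matrix.mulVec_mulVec,
      Matrix.mulVec_mulVec]
  -- entries of Pᵀ * Omg * P versus U
  have hNU : ∀ (m m' : Fin n),
      (Pᵀ * Omg * P) (k.succAbove m) (k.succAbove m') = (Uᵀ * Omg * U) m m' := by
    intro m m'
    simp [Matrix.mul_apply, hP, hU, Finset.sum_mul, Finset.mul_sum]
  have hNk : ∀ (m : Fin n),
      (Pᵀ * Omg * P) (k.succAbove m) k = (Uᵀ.mulVec (Omg.mulVec (u0 k))) m := by
    intro m
    simp only [Matrix.mul_apply, Matrix.mulVec, dotProduct, hP, hU,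
      Matrix.transpose_apply, Matrix.of_apply, Finset.sum_mul, Finset.mul_sum]
    rw [Finset.sum_comm]
    exact Finset.sum_congr rfl fun x _ => Finset.sum_congr rfl fun i _ => by ring
  -- the vector b and the restricted equation
  set b : Fin n → ℝ := Uᵀ.mulVec (Omg.mulVec (u0 k)) with hb
  set dU : Fin n → ℝ := fun m => d (k.succAbove m) with hdU
  have hMdU : M.mulVec dU = (-(d k)) • b := by
    ext m
    have hrow := congrFun hE (k.succAbove m)
    rw [Matrix.mulVec] at hrow
    rw [show ((Pᵀ * Omg * P) (k.succAbove m) ⬝ᵥ d)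
        = (Pᵀ * Omg * P) (k.succAbove m) k * d k
          + ∑ m', (Pᵀ * Omg * P) (k.succAbove m) (k.succAbove m') * d (k.succAbove m')
      from by
        rw [dotProduct]
        exact Fin.sum_univ_succAbove
          (fun j => (Pᵀ * Omg * P) (k.succAbove m) j * d j) k] at hrow
    have hUU : ∑ m', (Pᵀ * Omg * P) (k.succAbove m) (k.succAbove m') * d (k.succAbove m')
        = ((Uᵀ * Omg * U).mulVec dU) m := by
      rw [Matrix.mulVec, dotProduct]
      exact Finset.sum_congr rfl fun m' _ => by rw [hNU m m']
    rw [hNk m, hUU] at hrow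
    simp only [Pi.smul_apply, smul_eq_mul] at hrow
    -- hrow : b m * d k + (UᵀΩU dU) m = lamk * ((√λ0(sm))⁻¹ * c (sm))
    have e1 : (lam0 (k.succAbove m))⁻¹ * Real.sqrt (lam0 (k.succAbove m))
        = (Real.sqrt (lam0 (k.succAbove m)))⁻¹ := by
      calc (lam0 (k.succAbove m))⁻¹ * Real.sqrt (lam0 (k.succAbove m))
          = (Real.sqrt (lam0 (k.succAbove m)) * Real.sqrt (lam0 (k.succAbove m)))⁻¹
            * Real.sqrt (lam0 (k.succAbove m)) := by rw [hsq]
      _ = _ := by rw [mul_inv, mul_assoc, inv_mul_cancel₀ (hs0 _), mul_one]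
    have hdiag : lamk * ((lam0 (k.succAbove m))⁻¹ * dU m)
        = lamk * ((Real.sqrt (lam0 (k.succAbove m)))⁻¹ * c (k.succAbove m)) := by
      simp only [hdU, hd]
      calc lamk * ((lam0 (k.succAbove m))⁻¹
            * (Real.sqrt (lam0 (k.succAbove m)) * c (k.succAbove m)))
          = lamk * (((lam0 (k.succAbove m))⁻¹ * Real.sqrt (lam0 (k.succAbove m)))
            * c (k.succAbove m)) := by ring
      _ = _ := by rw [e1]
    rw [hM]
    have hL : ((Uᵀ * Omg * U - lamk • Matrix.diagonal (fun j => (lam0 (k.succAbove j))⁻¹)).mulVec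
        dU) m = ((Uᵀ * Omg * U).mulVec dU) m - lamk * ((lam0 (k.succAbove m))⁻¹ * dU m) := by
      rw [Matrix.sub_mulVec, Pi.sub_apply, Matrix.smul_mulVec, Pi.smul_apply,
        smul_eq_mul, Matrix.mulVec_diagonal]
    rw [hL, hdiag]
    have hR : ((-(d k)) • b) m = -(d k) * b m := rfl
    rw [hR]
    linarith [hrow]
  -- solve for dU
  have hdet : IsUnit M.det := (Matrix.isUnit_iff_isUnit_det M).mp hMunit
  have hdUval : dU = (-(d k)) • M⁻¹.mulVec b := by
    have := congrArg (M⁻¹.mulVec) hMdU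
    rwa [Matrix.mulVec_mulVec, Matrix.nonsing_inv_mul M hdet, Matrix.one_mulVec,
      Matrix.mulVec_smul] at this
  -- relation between c (succAbove m) and v
  have hcv : ∀ m, c (k.succAbove m) = -(d k) * v m := by
    intro m
    have h1 : (M⁻¹.mulVec b) m = Real.sqrt (lam0 (k.succAbove m)) * v m := by
      rw [hv, Matrix.mulVec_diagonal, ← mul_assoc, mul_inv_cancel₀ (hs0 _), one_mul]
    have h2 : Real.sqrt (lam0 (k.succAbove m)) * c (k.succAbove m)
        = Real.sqrt (lam0 (k.succAbove m)) * (-(d k) * v m) := by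
      have h4 := congrFun hdUval m
      simp only [Pi.smul_apply, smul_eq_mul, hdU] at h4
      rw [h1] at h4
      simp only [hd] at h4
      rw [h4]; ring
    exact mul_left_cancel₀ (hs0 _) h2
  -- the norm identity
  have hsum1 : ∑ i, uk i ^ 2 = 1 := by
    have h0 : (0:ℝ) ≤ ∑ i, uk i ^ 2 := Finset.sum_nonneg fun i _ => sq_nonneg _
    have h1 : Real.sqrt (∑ i, uk i ^ 2) = 1 := huk
    calc ∑ i, uk i ^ 2 = Real.sqrt (∑ i, uk i ^ 2) ^ 2 := (Real.sq_sqrt h0).symm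
    _ = 1 := by rw [h1]; norm_num
  have hsumc : ∑ i, c i ^ 2 = 1 := by
    have h1 : uk ⬝ᵥ uk = c ⬝ᵥ c := by
      calc uk ⬝ᵥ uk = uk ⬝ᵥ P.mulVec c := by rw [← hukc]
      _ = (uk ᵥ* P) ⬝ᵥ c := Matrix.dotProduct_mulVec uk P c
      _ = (Pᵀ.mulVec uk) ⬝ᵥ c := by rw [Matrix.mulVec_transpose]
      _ = c ⬝ᵥ c := by rw [hPtuk]
    have h2 : ∑ i, uk i ^ 2 = ∑ i, c i ^ 2 := by
      simpa [dotProduct, pow_two] using h1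
    linarith [hsum1, h2]
  -- put it together
  set S : ℝ := ∑ m, v m ^ 2 with hS
  have hsplit : (1:ℝ) = c k ^ 2 + d k ^ 2 * S := by
    rw [← hsumc, Fin.sum_univ_succAbove (fun i => c i ^ 2) k, hS, Finset.mul_sum]
    congr 1
    exact Finset.sum_congr rfl fun m _ => by rw [hcv m]; ring
  have hdk : d k ^ 2 = lam0 k * c k ^ 2 := by
    simp only [hd]
    rw [mul_pow, Real.sq_sqrt (hpos k).le]
  have hck : uk ⬝ᵥ u0 k = c k := by
    rw [hc]
    simp [dotProduct, mul_comm]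
  have hnorm : vecNorm (Real.sqrt (lam0 k) • v) ^ 2 = lam0 k * S := by
    rw [vecNorm, Real.sq_sqrt (Finset.sum_nonneg fun i _ => sq_nonneg _), hS,
      Finset.mul_sum]
    exact Finset.sum_congr rfl fun m _ => by
      simp only [Pi.smul_apply, smul_eq_mul, mul_pow]
      rw [Real.sq_sqrt (hpos k).le]
  rw [hck, hnorm]
  have hSnn : 0 ≤ S := Finset.sum_nonneg fun i _ => sq_nonneg _
  have hden : 0 < 1 + lam0 k * S := by nlinarith [hpos k]
  rw [hdk] at hsplit
  rw [eq_div_iff (ne_of_gt hden)]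
  nlinarith [hsplit]
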